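/- Let M1, M2 be integers with 4 ≤ M1 ≤ M2. Then the average effective resistance of the two-dimensional toroidal grid satisfies R_ave(T_{M1,M2}) ≥ (1/12)·(M2/M1) − 1/24. -/

import Mathlib

open Real Finset

lemma tele_sum (n : ℕ) (hn : 2 ≤ n) : ∀ N, n ≤ N →
    ∑ j ∈ Finset.Ico n N, (1:ℝ)/(j:ℝ)^2 ≤ 1/((n:ℝ)-1) - 1/((N:ℝ)-1) := by
  intro N hN
  induction N with
  | zero => omega
  | succ N ih =>
    rcases eq_or_lt_of_le hN with h | h
    · rw [← h]
      simp
    · have hN' : n ≤ N := by omega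
      rw [Finset.sum_Ico_succ_top hN']
      have h1 := ih hN'
      have h2 : (2:ℝ) ≤ (n:ℝ) := by exact_mod_cast hn
      have hNr : (n:ℝ) ≤ (N:ℝ) := by exact_mod_cast hN'
      have hNpos : (0:ℝ) < (N:ℝ) - 1 := by linarith
      have hN0 : (0:ℝ) < (N:ℝ) := by linarith
      have key : (1:ℝ)/(N:ℝ)^2 ≤ 1/((N:ℝ)-1) - 1/(N:ℝ) := by
        rw [div_sub_div _ _ (ne_of_gt hNpos) (ne_of_gt hN0)]
        have : (1:ℝ) * (N:ℝ) - ((N:ℝ)-1) * 1 = 1 := by ring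
        rw [this]
        apply one_div_le_one_div_of_le (by positivity)
        nlinarith
      push_cast
      have e : (1:ℝ)/((N:ℝ)+1-1) = 1/(N:ℝ) := by norm_num
      linarith

lemma basel_lower (n : ℕ) (hn : 2 ≤ n) :
    π^2/6 - 1/((n:ℝ)-1) ≤ ∑ j ∈ Finset.range n, (1:ℝ)/(j:ℝ)^2 := by
  have hs := hasSum_zeta_two
  have ht := hs.tendsto_sum_nat
  have h2 : (2:ℝ) ≤ (n:ℝ) := by exact_mod_cast hn
  have hb : ∀ᶠ N in Filter.atTop, (∑ i ∈ Finset.range N, (1:ℝ)/(i:ℝ)^2)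
      ≤ ∑ j ∈ Finset.range n, (1:ℝ)/(j:ℝ)^2 + 1/((n:ℝ)-1) := by
    filter_upwards [Filter.eventually_ge_atTop n] with N hN
    have hsplit : ∑ i ∈ Finset.range n, (1:ℝ)/(i:ℝ)^2 + ∑ i ∈ Finset.Ico n N, (1:ℝ)/(i:ℝ)^2
        = ∑ i ∈ Finset.range N, (1:ℝ)/(i:ℝ)^2 := by
      rw [Finset.range_eq_Ico, Finset.range_eq_Ico]
      exact Finset.sum_Ico_consecutive (fun i => (1:ℝ)/(i:ℝ)^2) (Nat.zero_le n) hN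
    have h3 := tele_sum n hn N hN
    have hNr : (n:ℝ) ≤ (N:ℝ) := by exact_mod_cast hN
    have : (0:ℝ) ≤ 1/((N:ℝ)-1) := one_div_nonneg.2 (by linarith)
    linarith
  have := le_of_tendsto ht hb
  linarith

/-- Average effective resistance of the two-dimensional toroidal grid `T_{M1,M2}`. -/
noncomputable def Rave2 (M1 M2 : ℕ) : ℝ :=
  (1 / ((M1 : ℝ) * M2)) * ∑ i ∈ Finset.range M1, ∑ j ∈ Finset.range M2,
    if i = 0 ∧ j = 0 then 0
    else 1 / (4 - 2 * Real.cos (2 * Real.pi * i / M1) - 2 * Real.cos (2 * Real.pi * j / M2))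


set_option maxHeartbeats 1000000 in
theorem torus2_lower_one (M1 M2 : ℕ) (h1 : 4 ≤ M1) (h12 : M1 ≤ M2) :
    Rave2 M1 M2 ≥ (1 / 12) * ((M2 : ℝ) / M1) - 1 / 24 := by
  have hM2 : 4 ≤ M2 := le_trans h1 h12
  have hm1 : (4:ℝ) ≤ (M1:ℝ) := by exact_mod_cast h1
  have hm2 : (4:ℝ) ≤ (M2:ℝ) := by exact_mod_cast hM2
  have hm12 : (M1:ℝ) ≤ (M2:ℝ) := by exact_mod_cast h12
  have hm1pos : (0:ℝ) < M1 := by linarith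
  have hm2pos : (0:ℝ) < M2 := by linarith
  have hpi := Real.pi_gt_three
  set K := (M2-1)/2 with hKdef
  have hK1 : 1 ≤ K := by omega
  have hK2 : 2*K ≤ M2 - 1 := by omega
  have hK3 : M2 ≤ 2*(K+1) := by omega
  set f : ℕ → ℝ := fun j => 1 / (2 - 2*Real.cos (2*π*(j:ℝ)/(M2:ℝ))) with hf
  set G : ℕ → ℕ → ℝ := fun i j => if i = 0 ∧ j = 0 then (0:ℝ)
    else 1 / (4 - 2*Real.cos (2*π*(i:ℝ)/(M1:ℝ)) - 2*Real.cos (2*π*(j:ℝ)/(M2:ℝ))) with hG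
  -- nonnegativity of all terms
  have hGnn : ∀ i j : ℕ, 0 ≤ G i j := by
    intro i j
    rw [hG]
    dsimp only
    split
    · exact le_refl 0
    · apply one_div_nonneg.2
      have c1 := Real.cos_le_one (2*π*(i:ℝ)/(M1:ℝ))
      have c2 := Real.cos_le_one (2*π*(j:ℝ)/(M2:ℝ))
      linarith
  -- the sin identity and lower bound for f
  have hflow : ∀ j : ℕ, 1 ≤ j → j < M2 →
      (0 < 2 - 2*Real.cos (2*π*(j:ℝ)/(M2:ℝ))) ∧ (M2:ℝ)^2/(4*π^2*(j:ℝ)^2) ≤ f j := by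
    intro j hj1 hj2
    have hjr : (1:ℝ) ≤ (j:ℝ) := by exact_mod_cast hj1
    have hjm : (j:ℝ) < (M2:ℝ) := by exact_mod_cast hj2
    set x := π*(j:ℝ)/(M2:ℝ) with hx
    have hx0 : 0 < x := by
      apply div_pos (by positivity) hm2pos
    have hxpi : x < π := by
      rw [hx, div_lt_iff₀ hm2pos]
      nlinarith [Real.pi_pos]
    have hsinpos : 0 < Real.sin x := Real.sin_pos_of_pos_of_lt_pi hx0 hxpi
    have hsinle : Real.sin x ≤ x := Real.sin_le (le_of_lt hx0)
    have hid : 2 - 2*Real.cos (2*π*(j:ℝ)/(M2:ℝ)) = 4 * Real.sin x ^ 2 := by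
      have := Real.sin_sq_eq_half_sub x
      have h2x : 2 * x = 2*π*(j:ℝ)/(M2:ℝ) := by rw [hx]; ring
      rw [← h2x]
      linarith [this]
    constructor
    · rw [hid]; positivity
    · rw [hf]
      dsimp only
      rw [hid]
      have hxx : (M2:ℝ)^2/(4*π^2*(j:ℝ)^2) = 1 / (4 * x^2) := by
        rw [hx]
        field_simp
      rw [hxx]
      apply one_div_le_one_div_of_le (by positivity)
      nlinarith
  -- row 0
  have hrow0 : ∀ j : ℕ, G 0 j = if j = 0 then 0 else f j := by
    intro j
    rw [hG, hf]
    dsimp only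
    have : 2*π*((0:ℕ):ℝ)/(M1:ℝ) = 0 := by norm_num
    rw [this, Real.cos_zero]
    by_cases hj : j = 0 <;> simp [hj] <;> norm_num
  -- the sets
  set A := Finset.Icc 1 K with hA
  set B := A.image (fun j => M2 - j) with hB
  have hmemA : ∀ j ∈ A, 1 ≤ j ∧ j ≤ K := by
    intro j hj; rw [hA, Finset.mem_Icc] at hj; exact hj
  have hmemB : ∀ j ∈ B, M2 - K ≤ j ∧ j ≤ M2 - 1 := by
    intro j hj
    rw [hB, Finset.mem_image] at hj
    obtain ⟨a, ha, rfl⟩ := hj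
    have := hmemA a ha
    omega
  have hdisj : Disjoint A B := by
    rw [Finset.disjoint_left]
    intro a haA haB
    have h1 := hmemA a haA
    have h2 := hmemB a haB
    omega
  have hsubset : A ∪ B ⊆ Finset.range M2 := by
    intro j hj
    rw [Finset.mem_union] at hj
    rw [Finset.mem_range]
    rcases hj with hj | hj
    · have := hmemA j hj; omega
    · have := hmemB j hj; omega
  have hne0 : ∀ j ∈ A ∪ B, 1 ≤ j ∧ j < M2 := by
    intro j hj
    rw [Finset.mem_union] at hj
    rcases hj with hj | hj
    · have := hmemA j hj; omega
    · have := hmemB j hj; omega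
  -- step: restrict double sum to row 0
  have hD1 : ∑ j ∈ Finset.range M2, G 0 j ≤ ∑ i ∈ Finset.range M1, ∑ j ∈ Finset.range M2, G i j := by
    apply Finset.single_le_sum (f := fun i => ∑ j ∈ Finset.range M2, G i j)
    · intro i _
      exact Finset.sum_nonneg (fun j _ => hGnn i j)
    · rw [Finset.mem_range]; omega
  -- restrict row 0 to A ∪ B
  have hD2 : ∑ j ∈ A ∪ B, G 0 j ≤ ∑ j ∈ Finset.range M2, G 0 j := by
    apply Finset.sum_le_sum_of_subset_of_nonneg hsubset
    intro j _ _
    exact hGnn 0 j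
  have hD3 : ∑ j ∈ A ∪ B, G 0 j = ∑ j ∈ A, f j + ∑ j ∈ B, f j := by
    rw [Finset.sum_union hdisj]
    congr 1
    · apply Finset.sum_congr rfl
      intro j hj
      have h := hmemA j hj
      rw [hrow0 j, if_neg (by omega)]
    · apply Finset.sum_congr rfl
      intro j hj
      have h := hmemB j hj
      rw [hrow0 j, if_neg (by omega)]
  have hinj : ∀ a ∈ A, ∀ b ∈ A, M2 - a = M2 - b → a = b := by
    intro a ha b hb hab
    have h1 := hmemA a ha
    have h2 := hmemA b hb
    omega
  have hsym : ∀ j ∈ A, f (M2 - j) = f j := by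
    intro j hj
    have h := hmemA j hj
    have hjm : j ≤ M2 := by omega
    rw [hf]
    dsimp only
    have hcast : ((M2 - j : ℕ) : ℝ) = (M2:ℝ) - (j:ℝ) := by
      push_cast [hjm]; ring
    rw [hcast]
    have harg : 2*π*((M2:ℝ) - (j:ℝ))/(M2:ℝ) = 2*π - 2*π*(j:ℝ)/(M2:ℝ) := by
      field_simp
    rw [harg, Real.cos_two_pi_sub]
  have hD4 : ∑ j ∈ B, f j = ∑ j ∈ A, f j := by
    rw [hB, Finset.sum_image hinj]
    exact Finset.sum_congr rfl hsym
  -- lower bound the A-sum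
  have hD5 : (M2:ℝ)^2/(4*π^2) * ∑ j ∈ A, (1:ℝ)/(j:ℝ)^2 ≤ ∑ j ∈ A, f j := by
    have e : (M2:ℝ)^2/(4*π^2) * ∑ j ∈ A, (1:ℝ)/(j:ℝ)^2
        = ∑ j ∈ A, (M2:ℝ)^2/(4*π^2*(j:ℝ)^2) := by
      rw [Finset.mul_sum]
      apply Finset.sum_congr rfl
      intro j _
      rw [mul_one_div, div_div]
    rw [e]
    apply Finset.sum_le_sum
    intro j hj
    have h := hmemA j hj
    exact (hflow j h.1 (by omega)).2
  -- Basel bound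
  have hD6 : π^2/6 - 1/((K:ℝ)+1) - 1/((K:ℝ)+1)^2 ≤ ∑ j ∈ A, (1:ℝ)/(j:ℝ)^2 := by
    have e : ∑ j ∈ A, (1:ℝ)/(j:ℝ)^2 = ∑ j ∈ Finset.range (K+1), (1:ℝ)/(j:ℝ)^2 := by
      rw [hA, ← Finset.Ico_add_one_right_eq_Icc, Finset.range_eq_Ico,
        ← Finset.sum_Ico_consecutive (fun j => (1:ℝ)/(j:ℝ)^2) (Nat.zero_le 1) (by omega)]
      simp
    rw [e]
    have hb := basel_lower (K+2) (by omega)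
    rw [Finset.sum_range_succ] at hb
    have e2 : ((K+2:ℕ):ℝ) - 1 = (K:ℝ)+1 := by push_cast; ring
    have e3 : ((K+1:ℕ):ℝ) = (K:ℝ)+1 := by push_cast; ring
    rw [e2, e3] at hb
    linarith
  -- arithmetic conclusion
  have hKr : (M2:ℝ)/2 ≤ (K:ℝ)+1 := by
    have : (M2:ℝ) ≤ 2*((K:ℝ)+1) := by exact_mod_cast hK3
    linarith
  have hKrpos : (0:ℝ) < (K:ℝ)+1 := by positivity
  have hc1 : 1/((K:ℝ)+1) ≤ 2/(M2:ℝ) := by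
    rw [div_le_div_iff₀ hKrpos hm2pos]
    linarith
  have hc2 : 1/((K:ℝ)+1)^2 ≤ 4/(M2:ℝ)^2 := by
    rw [div_le_div_iff₀ (by positivity) (by positivity)]
    nlinarith
  have hpi2 : (9:ℝ) < π^2 := by nlinarith
  have hS : π^2/6 - 2/(M2:ℝ) - 4/(M2:ℝ)^2 ≤ ∑ j ∈ A, (1:ℝ)/(j:ℝ)^2 := by linarith
  -- total lower bound for double sum
  have hDtot : (M2:ℝ)^2/12 - (M1:ℝ)*(M2:ℝ)/24
      ≤ ∑ i ∈ Finset.range M1, ∑ j ∈ Finset.range M2, G i j := by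
    have hAf : (M2:ℝ)^2/(4*π^2) * (π^2/6 - 2/(M2:ℝ) - 4/(M2:ℝ)^2) ≤ ∑ j ∈ A, f j := by
      calc (M2:ℝ)^2/(4*π^2) * (π^2/6 - 2/(M2:ℝ) - 4/(M2:ℝ)^2)
          ≤ (M2:ℝ)^2/(4*π^2) * ∑ j ∈ A, (1:ℝ)/(j:ℝ)^2 := by
            apply mul_le_mul_of_nonneg_left hS (by positivity)
        _ ≤ ∑ j ∈ A, f j := hD5
    have hval : 2 * ((M2:ℝ)^2/(4*π^2) * (π^2/6 - 2/(M2:ℝ) - 4/(M2:ℝ)^2))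
        = (M2:ℝ)^2/12 - (M2:ℝ)/π^2 - 2/π^2 := by
      field_simp
      ring
    have hfinal : (M2:ℝ)^2/12 - (M1:ℝ)*(M2:ℝ)/24 ≤ (M2:ℝ)^2/12 - (M2:ℝ)/π^2 - 2/π^2 := by
      have hu : (M2:ℝ)/π^2 ≤ (M2:ℝ)/9 := by
        apply div_le_div_of_nonneg_left (by linarith) (by norm_num) (le_of_lt hpi2)
      have hu2 : (2:ℝ)/π^2 ≤ 2/9 := by
        apply div_le_div_of_nonneg_left (by norm_num) (by norm_num) (le_of_lt hpi2)
      nlinarith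
    linarith [hD1, hD2, hD3.ge, hD4.ge, hAf]
  -- finish
  rw [Rave2, ge_iff_le]
  have hGe : ∑ i ∈ Finset.range M1, ∑ j ∈ Finset.range M2,
      (if i = 0 ∧ j = 0 then (0:ℝ)
        else 1 / (4 - 2 * Real.cos (2 * Real.pi * i / M1) - 2 * Real.cos (2 * Real.pi * j / M2)))
      = ∑ i ∈ Finset.range M1, ∑ j ∈ Finset.range M2, G i j := rfl
  rw [hGe]
  have hmono : (1 / ((M1:ℝ) * M2)) * ((M2:ℝ)^2/12 - (M1:ℝ)*(M2:ℝ)/24)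
      ≤ (1 / ((M1:ℝ) * M2)) * ∑ i ∈ Finset.range M1, ∑ j ∈ Finset.range M2, G i j := by
    apply mul_le_mul_of_nonneg_left hDtot (by positivity)
  have heq : (1 / ((M1:ℝ) * M2)) * ((M2:ℝ)^2/12 - (M1:ℝ)*(M2:ℝ)/24)
      = (1/12) * ((M2:ℝ)/M1) - 1/24 := by
    field_simp
  linarith
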